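/- Assume (a) there exists a λ-Kurepa tree with 2^λ many λ-branches, (b) D is a uniform filter on λ, (c) p ∈ Q⁰_λ(𝓕^pr) is such that fil(p) ⊆ D, and (d) if λ is a limit cardinal, then λ is strongly inaccessible and p ∈ Q⁰_λ(𝓕^spr). Then D cannot be generated by fewer than 2^λ sets: for every family 𝓧 ⊆ D of cardinality less than 2^λ there is a set A ∈ D such that |X ∖ A| = λ for all X ∈ 𝓧. -/

import Mathlib

namespace RS889

noncomputable section

open Cardinal Set

universe u v

/-- `F` is a (proper) filter on the set `Z`, presented as the family of its members. -/
def IsFilterOn {α : Type u} (F : Set (Set α)) (Z : Set α) : Prop :=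
  (∀ A ∈ F, A ⊆ Z) ∧ Z ∈ F ∧
    (∀ A ∈ F, ∀ B, A ⊆ B → B ⊆ Z → B ∈ F) ∧
    (∀ A ∈ F, ∀ B ∈ F, A ∩ B ∈ F) ∧ ∅ ∉ F

/-- The family `F⁺` of `F`-positive subsets of `Z`. -/
def posOf {α : Type u} (F : Set (Set α)) (Z : Set α) : Set (Set α) :=
  {B | B ⊆ Z ∧ ∀ C ∈ F, (B ∩ C).Nonempty}

/-- `F` is an ultrafilter on the set `Z`. -/
def IsUltraOn {α : Type u} (F : Set (Set α)) (Z : Set α) : Prop :=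
  IsFilterOn F Z ∧ ∀ A ⊆ Z, A ∈ F ∨ Z \ A ∈ F

/-- An unultra filter: every positive set splits into two positive pieces. -/
def Unultra {α : Type u} (F : Set (Set α)) (Z : Set α) : Prop :=
  ∀ A ∈ posOf F Z, ∃ B ⊆ A, B ∈ posOf F Z ∧ A \ B ∈ posOf F Z

/-- The sum `⊕^E_{x ∈ X} Fx x` of the filters `Fx x` on the sets `Z x` over a filter `E` on `X`. -/
def filSum {α : Type u} {β : Type v} (X : Set α) (E : Set (Set α))
    (Z : α → Set β) (Fx : α → Set (Set β)) : Set (Set β) :=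
  {A | A ⊆ (⋃ x ∈ X, Z x) ∧ {x | x ∈ X ∧ Z x ∩ A ∈ Fx x} ∈ E}

/-- The sum `⊕_{ζ<ξ} F ζ` over the filter of co-bounded subsets of `ξ`. -/
def cobddSum {α : Type u} (ξ : Ordinal.{0}) (Z : Ordinal.{0} → Set α)
    (F : Ordinal.{0} → Set (Set α)) : Set (Set α) :=
  {A | A ⊆ (⋃ ζ ∈ Set.Iio ξ, Z ζ) ∧ ∃ β < ξ, ∀ ζ, β ≤ ζ → ζ < ξ → Z ζ ∩ A ∈ F ζ}

/-- A triple `(α, Z, F)`: an ordinal, a set of ordinals and a family of subsets of `Z`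
(intended to be a filter on `Z`). -/
structure LocalFilter : Type 1 where
  a : Ordinal.{0}
  Z : Set Ordinal.{0}
  F : Set (Set Ordinal.{0})

/-- A system of local filters on `lam`. -/
def IsLFS (lam : Cardinal.{0}) (S : Set LocalFilter) : Prop :=
  (∀ t ∈ S, t.Z ⊆ Set.Iio lam.ord ∧ #t.Z < Cardinal.lift.{1} lam ∧
      IsLeast t.Z t.a ∧ IsFilterOn t.F t.Z) ∧
    ∀ β < lam.ord, ∃ t ∈ S, β ≤ t.a

/-- The family `Q*_lam(S)`. -/
def Qstar (lam : Cardinal.{0}) (S : Set LocalFilter) : Set (Set LocalFilter) :=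
  {r | r ⊆ S ∧ #r = Cardinal.lift.{1} lam ∧
    ∀ ξ : Ordinal.{0}, #{t | t ∈ r ∧ t.a = ξ} < Cardinal.lift.{1} lam}

/-- The filter `fil(r)` on `lam` generated by `r`. -/
def fil (lam : Cardinal.{0}) (r : Set LocalFilter) : Set (Set Ordinal.{0}) :=
  {A | A ⊆ Set.Iio lam.ord ∧ ∃ ε < lam.ord, ∀ t ∈ r, ε ≤ t.a → A ∩ t.Z ∈ t.F}

/-- `r` is strongly disjoint. -/
def StronglyDisjoint (r : Set LocalFilter) : Prop :=
  (∀ s ∈ r, ∀ t ∈ r, s.a = t.a → s = t) ∧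
    ∀ s ∈ r, ∀ t ∈ r, s.a < t.a → s.Z ⊆ Set.Iio t.a

/-- The family `Q⁰_lam(S)` of strongly disjoint members of `Q*_lam(S)`. -/
def Qzero (lam : Cardinal.{0}) (S : Set LocalFilter) : Set (Set LocalFilter) :=
  {r | r ∈ Qstar lam S ∧ StronglyDisjoint r}

/-- `fil(H) = ⋃ { fil(r) : r ∈ H }`. -/
def filH (lam : Cardinal.{0}) (H : Set (Set LocalFilter)) : Set (Set Ordinal.{0}) :=
  {A | ∃ r ∈ H, A ∈ fil lam r}

/-- A uniform family of subsets of `lam`: every member has cardinality `lam`. -/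
def IsUniform (lam : Cardinal.{0}) (D : Set (Set Ordinal.{0})) : Prop :=
  ∀ A ∈ D, #A = Cardinal.lift.{1} lam

/-- `C` is a club (closed unbounded) subset of `lam`. -/
def IsClub (lam : Cardinal.{0}) (C : Set Ordinal.{0}) : Prop :=
  C ⊆ Set.Iio lam.ord ∧ (∀ β < lam.ord, ∃ γ ∈ C, β < γ) ∧
    ∀ δ, δ < lam.ord → δ ≠ 0 → (∀ β < δ, ∃ γ ∈ C, β < γ ∧ γ < δ) → δ ∈ C

/-- `St` is stationary in `lam`. -/
def IsStationary (lam : Cardinal.{0}) (St : Set Ordinal.{0}) : Prop :=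
  ∀ C, IsClub lam C → (St ∩ C).Nonempty

/-- `D` is a weakly reasonable (ultra)filter on `lam`. -/
def WeaklyReasonable (lam : Cardinal.{0}) (D : Set (Set Ordinal.{0})) : Prop :=
  ∀ f : Ordinal.{0} → Ordinal.{0},
    (∀ δ < lam.ord, f δ < lam.ord) →
    (∀ δ δ', δ ≤ δ' → δ' < lam.ord → f δ ≤ f δ') →
    (∀ β < lam.ord, ∃ δ < lam.ord, β ≤ f δ) →
    ∃ C, IsClub lam C ∧ (⋃ δ ∈ C, Set.Ico δ (δ + f δ)) ∉ D

/-- `e` is the increasing enumeration of `C ∪ {0}` (in order type `lam`). -/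
def IsEnum (lam : Cardinal.{0}) (C : Set Ordinal.{0}) (e : Ordinal.{0} → Ordinal.{0}) : Prop :=
  (∀ ξ η, ξ < η → η < lam.ord → e ξ < e η) ∧
    (∀ ξ < lam.ord, e ξ ∈ insert 0 C) ∧
    ∀ γ ∈ insert 0 C, ∃ ξ < lam.ord, e ξ = γ

/-- The quotient `D/C`, where `e` is the increasing enumeration of `C ∪ {0}`. -/
def quotFil (lam : Cardinal.{0}) (D : Set (Set Ordinal.{0})) (e : Ordinal.{0} → Ordinal.{0}) :
    Set (Set Ordinal.{0}) :=
  {A | A ⊆ Set.Iio lam.ord ∧ (⋃ ξ ∈ A, Set.Ico (e ξ) (e (ξ + 1))) ∈ D}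

/-- `d` is an increasing continuous sequence of ordinals below `lam` (indexed by `ξ < lam`). -/
def IncrCont (lam : Cardinal.{0}) (d : Ordinal.{0} → Ordinal.{0}) : Prop :=
  (∀ ξ < lam.ord, d ξ < lam.ord) ∧
    (∀ ξ η, ξ < η → η < lam.ord → d ξ < d η) ∧
    ∀ δ, δ < lam.ord → Order.IsSuccLimit δ → ∀ β < d δ, ∃ ξ < δ, β ≤ d ξ

/-- The full system `𝓕^ult` of local non-principal ultrafilters on `lam`. -/
def Fult (lam : Cardinal.{0}) : Set LocalFilter :=
  {t | t.a < lam.ord ∧ t.a ∈ t.Z ∧ t.Z ⊆ {o | t.a ≤ o ∧ o < lam.ord} ∧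
      t.Z.Infinite ∧ #t.Z < Cardinal.lift.{1} lam ∧ IsUltraOn t.F t.Z ∧
      ∀ x : Ordinal.{0}, ({x} : Set Ordinal.{0}) ∉ t.F}

/-- `Σ(p)`. -/
def SigmaP (lam : Cardinal.{0}) (p : Set LocalFilter) : Set LocalFilter :=
  {t | t ∈ Fult lam ∧ ∀ A ∈ t.F, ∃ s ∈ p, A ∩ s.Z ∈ s.F}

/-- A linked family `H ⊆ Q*_lam`. -/
def Linked (lam : Cardinal.{0}) (H : Set (Set LocalFilter)) : Prop :=
  H.Nonempty ∧ ∀ S : Set (Set LocalFilter), S ⊆ H → S.Finite → S.Nonempty →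
    #{α : Ordinal.{0} | ∃ t : LocalFilter, t.a = α ∧ ∀ p ∈ S, t ∈ SigmaP lam p} =
      Cardinal.lift.{1} lam

/-- A big family `H ⊆ Q*_lam`. -/
def Big (lam : Cardinal.{0}) (H : Set (Set LocalFilter)) : Prop :=
  H.Nonempty ∧ ∀ D ⊆ Fult lam, ∃ q ∈ H, q ⊆ D ∨ q ∩ D = ∅

/-- The condition `(⊕)^sum_S`. -/
def SumCond (lam : Cardinal.{0}) (S : Set LocalFilter) : Prop :=
  ∀ κ : Cardinal.{0}, ℵ₀ ≤ κ → κ < lam →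
    ∀ t : Ordinal.{0} → LocalFilter,
      (∀ ξ < κ.ord, t ξ ∈ S) →
      (∀ ξ ζ, ξ < ζ → ζ < κ.ord → (t ξ).Z ⊆ Set.Iio (t ζ).a) →
      ∃ E : Set (Set Ordinal.{0}), IsFilterOn E (Set.Iio κ.ord) ∧
        (∀ A ∈ E, #A = Cardinal.lift.{1} κ) ∧
        (LocalFilter.mk (t 0).a (⋃ ξ ∈ Set.Iio κ.ord, (t ξ).Z)
          (filSum (Set.Iio κ.ord) E (fun ξ => (t ξ).Z) (fun ξ => (t ξ).F))) ∈ S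

/-- `(<lam⁺)`-completeness of a subfamily `Q` of `Q*` with respect to `≤*`. -/
def Complete (lam : Cardinal.{0}) (Q : Set (Set LocalFilter)) : Prop :=
  ∀ γ : Ordinal.{0}, γ.card ≤ lam →
    ∀ p : Ordinal.{0} → Set LocalFilter,
      (∀ ξ < γ, p ξ ∈ Q) →
      (∀ ξ ζ, ξ ≤ ζ → ζ < γ → fil lam (p ξ) ⊆ fil lam (p ζ)) →
      ∃ q ∈ Q, ∀ ξ < γ, fil lam (p ξ) ⊆ fil lam q

/-- The full system `𝓕₀` of co-bounded filters on `lam`. -/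
def Fcobdd (lam : Cardinal.{0}) : Set LocalFilter :=
  {t | t.a ∈ t.Z ∧ t.Z ⊆ {o | t.a ≤ o ∧ o < lam.ord} ∧
      #t.Z < Cardinal.lift.{1} lam ∧ sSup t.Z ∉ t.Z ∧
      t.F = {A | A ⊆ t.Z ∧ ∃ β < sSup t.Z, ∀ x ∈ t.Z, β ≤ x → x ∈ A}}

/-- The `Ē`-closure of a system `S` of local filters (as an inductive family:
it is closed under `E κ`-sums of `κ`-sequences of previously obtained triples). -/
inductive EClos (lam : Cardinal.{0}) (E : Cardinal.{0} → Set (Set Ordinal.{0}))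
    (S : Set LocalFilter) : LocalFilter → Prop
  | base : ∀ t ∈ S, EClos lam E S t
  | sum : ∀ κ : Cardinal.{0}, ℵ₀ ≤ κ → κ < lam →
      ∀ t : Ordinal.{0} → LocalFilter,
        (∀ ξ < κ.ord, EClos lam E S (t ξ)) →
        (∀ ξ ζ, ξ < ζ → ζ < κ.ord → (t ξ).Z ⊆ Set.Iio (t ζ).a) →
        EClos lam E S (LocalFilter.mk (t 0).a (⋃ ξ ∈ Set.Iio κ.ord, (t ξ).Z)
          (filSum (Set.Iio κ.ord) (E κ) (fun ξ => (t ξ).Z) (fun ξ => (t ξ).F)))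

/-- The full system `𝓕^unu` of local unultra filters on `lam`. -/
def Funu (lam : Cardinal.{0}) : Set LocalFilter :=
  {t | t.Z.Nonempty ∧ t.Z ⊆ Set.Iio lam.ord ∧ #t.Z < Cardinal.lift.{1} lam ∧
      IsLeast t.Z t.a ∧ IsFilterOn t.F t.Z ∧ Unultra t.F t.Z}

/-- A pararegularity system for `F` (on `Z`), indexed by finite subsets of `κ`. -/
def PRSystem (κ : Cardinal.{0}) (F : Set (Set Ordinal.{0})) (Z : Set Ordinal.{0}) : Prop :=
  ∃ A : Finset Ordinal.{0} → Set Ordinal.{0},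
    (∀ u : Finset Ordinal.{0}, ↑u ⊆ Set.Iio κ.ord → A u ∈ F) ∧
    (∀ u v : Finset Ordinal.{0}, ↑v ⊆ Set.Iio κ.ord → u ⊆ v → A v ⊆ A u) ∧
    (∀ U : Set Ordinal.{0}, U ⊆ Set.Iio κ.ord → U.Infinite →
      (⋂ ξ ∈ U, A {ξ}) = ∅) ∧
    F = {B | B ⊆ Z ∧ ∃ u : Finset Ordinal.{0}, ↑u ⊆ Set.Iio κ.ord ∧ A u ⊆ B}

/-- `F` is a pararegular filter on `Z` (with `α = min Z`). -/
def Pararegular (lam : Cardinal.{0}) (F : Set (Set Ordinal.{0})) (Z : Set Ordinal.{0})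
    (α : Ordinal.{0}) : Prop :=
  ∃ κ : Cardinal.{0}, (Ordinal.omega0 + α).card ≤ κ ∧ κ < lam ∧ PRSystem κ F Z

/-- `F` is a strongly pararegular filter on `Z` (with `α = min Z`). -/
def StronglyPararegular (lam : Cardinal.{0}) (F : Set (Set Ordinal.{0})) (Z : Set Ordinal.{0})
    (α : Ordinal.{0}) : Prop :=
  ∃ κ : Cardinal.{0}, 2 ^ (Ordinal.omega0 + α).card ≤ κ ∧ κ < lam ∧ PRSystem κ F Z

/-- The full system `𝓕^pr` of local pararegular filters on `lam`. -/
def Fpr (lam : Cardinal.{0}) : Set LocalFilter :=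
  {t | t.Z.Infinite ∧ t.Z ⊆ Set.Iio lam.ord ∧ #t.Z < Cardinal.lift.{1} lam ∧
      IsLeast t.Z t.a ∧ IsFilterOn t.F t.Z ∧ Pararegular lam t.F t.Z t.a}

/-- The full system `𝓕^spr` of local strongly pararegular filters on `lam`. -/
def Fspr (lam : Cardinal.{0}) : Set LocalFilter :=
  {t | t.Z.Infinite ∧ t.Z ⊆ Set.Iio lam.ord ∧ #t.Z < Cardinal.lift.{1} lam ∧
      IsLeast t.Z t.a ∧ IsFilterOn t.F t.Z ∧ StronglyPararegular lam t.F t.Z t.a}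

/-- The space `^lam lam`. -/
def Fn (lam : Cardinal.{0}) : Type 1 := ↥(Set.Iio lam.ord) → ↥(Set.Iio lam.ord)

/-- The basic open set `O_s` determined by a partial function `s` of length `γ`. -/
def basicOpen (lam : Cardinal.{0}) (γ : Ordinal.{0}) (s : Ordinal.{0} → Ordinal.{0}) : Set (Fn lam) :=
  {f | ∀ ξ : ↥(Set.Iio lam.ord), (ξ : Ordinal.{0}) < γ → ((f ξ : Ordinal.{0}) = s ξ)}

/-- `X ⊆ ^lam lam` is nowhere dense. -/
def NwDense (lam : Cardinal.{0}) (X : Set (Fn lam)) : Prop :=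
  ∀ γ < lam.ord, ∀ s : Ordinal.{0} → Ordinal.{0}, (∀ ξ < γ, s ξ < lam.ord) →
    ∃ γ', γ ≤ γ' ∧ γ' < lam.ord ∧ ∃ s' : Ordinal.{0} → Ordinal.{0},
      (∀ ξ < γ', s' ξ < lam.ord) ∧ (∀ ξ < γ, s' ξ = s ξ) ∧
      basicOpen lam γ' s' ∩ X = ∅

/-- `X` belongs to the ideal `M^lam_{lam,lam}`: it is covered by `lam` many
nowhere dense sets. -/
def MeagerSet (lam : Cardinal.{0}) (X : Set (Fn lam)) : Prop :=
  ∃ A : Ordinal.{0} → Set (Fn lam), (∀ ξ < lam.ord, NwDense lam (A ξ)) ∧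
    X ⊆ ⋃ ξ ∈ Set.Iio lam.ord, A ξ

/-- `cov(M^lam_{lam,lam})`. -/
def covM (lam : Cardinal.{0}) : Cardinal.{1} :=
  sInf {c | ∃ 𝓐 : Set (Set (Fn lam)), (∀ X ∈ 𝓐, MeagerSet lam X) ∧
    ⋃₀ 𝓐 = Set.univ ∧ #𝓐 = c}

/-- Nodes of trees of sequences of ordinals: a pair (level, function). -/
abbrev TNode : Type 1 := Ordinal.{0} × (Ordinal.{0} → Ordinal.{0})

/-- Truncation of a function below `γ` (with value `0` elsewhere). -/
def truncF (γ : Ordinal.{0}) (f : Ordinal.{0} → Ordinal.{0}) : Ordinal.{0} → Ordinal.{0} :=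
  fun ξ => if ξ < γ then f ξ else 0

/-- `T` is a tree of height `lam` of (normalized) sequences of ordinals `< lam`. -/
def IsTree (lam : Cardinal.{0}) (T : Set TNode) : Prop :=
  (∀ x ∈ T, x.1 < lam.ord ∧ (∀ ξ < x.1, x.2 ξ < lam.ord) ∧ x.2 = truncF x.1 x.2) ∧
    ∀ x ∈ T, ∀ γ ≤ x.1, (γ, truncF γ x.2) ∈ T

/-- The `γ`-th level of `T`. -/
def treeLevel (T : Set TNode) (γ : Ordinal.{0}) : Set TNode := {x | x ∈ T ∧ x.1 = γ}

/-- `T` is a `lam`-Kurepa tree: a tree of height `lam` all of whose levels are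
nonempty of cardinality `< lam`. -/
def IsKurepaTree (lam : Cardinal.{0}) (T : Set TNode) : Prop :=
  IsTree lam T ∧
    ∀ γ < lam.ord, (treeLevel T γ).Nonempty ∧
      #(treeLevel T γ) < Cardinal.lift.{1} lam

/-- The set of `lam`-branches of `T` (normalized functions all of whose proper
initial segments lie in `T`). -/
def branches (lam : Cardinal.{0}) (T : Set TNode) : Set (Ordinal.{0} → Ordinal.{0}) :=
  {f | f = truncF lam.ord f ∧ ∀ γ < lam.ord, (γ, truncF γ f) ∈ T}


/-! ### Auxiliary material for Proposition 3.7 -/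

section Aux

private lemma truncF_truncF {γ γ' : Ordinal.{0}} (h : γ ≤ γ') (f : Ordinal.{0} → Ordinal.{0}) :
    truncF γ (truncF γ' f) = truncF γ f := by
  funext ξ
  by_cases hξ : ξ < γ
  · simp [truncF, hξ, hξ.trans_le h]
  · simp [truncF, hξ]

private lemma truncF_eval_not_lt {γ ξ : Ordinal.{0}} (h : ¬ ξ < γ) (f : Ordinal.{0} → Ordinal.{0}) :
    truncF γ f ξ = 0 := by simp [truncF, h]

private lemma truncF_eval_lt {γ ξ : Ordinal.{0}} (h : ξ < γ) (f : Ordinal.{0} → Ordinal.{0}) :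
    truncF γ f ξ = f ξ := by simp [truncF, h]

/-- The cardinality of the set of restrictions of members of `BB` to `γ`. -/
private def resCard (BB : Set (Ordinal.{0} → Ordinal.{0})) (γ : Ordinal.{0}) : Cardinal.{1} :=
  #(truncF γ '' BB)

private lemma resCard_mono (BB : Set (Ordinal.{0} → Ordinal.{0})) {γ γ' : Ordinal.{0}}
    (h : γ ≤ γ') : resCard BB γ ≤ resCard BB γ' := by
  have himg : truncF γ '' (truncF γ' '' BB) = truncF γ '' BB := by
    rw [Set.image_image]
    exact Set.image_congr fun f _ => truncF_truncF h f
  calc resCard BB γ = #(truncF γ '' (truncF γ' '' BB)) := by rw [himg]; rfl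
    _ ≤ #(truncF γ' '' BB) := Cardinal.mk_image_le

private lemma resCard_zero_le (BB : Set (Ordinal.{0} → Ordinal.{0})) :
    resCard BB 0 ≤ 1 := by
  refine Cardinal.mk_le_one_iff_set_subsingleton.2 ?_
  rintro f ⟨η, -, rfl⟩ g ⟨ν, -, rfl⟩
  funext ξ
  rw [truncF_eval_not_lt (by exact (not_lt_of_ge (zero_le (a := ξ)))) η,
    truncF_eval_not_lt (by exact (not_lt_of_ge (zero_le (a := ξ)))) ν]

private lemma resCard_limit_le (BB : Set (Ordinal.{0} → Ordinal.{0})) {δ : Ordinal.{0}}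
    (hδ : ∀ β < δ, β + 1 < δ) :
    resCard BB δ ≤ Cardinal.prod (fun β : (Set.Iio δ) => resCard BB ((β : Ordinal.{0}) + 1)) := by
  classical
  have : Cardinal.prod (fun β : (Set.Iio δ) => resCard BB ((β : Ordinal.{0}) + 1)) =
      #(∀ β : (Set.Iio δ), (truncF ((β : Ordinal.{0}) + 1) '' BB)) := by
    rw [Cardinal.mk_pi]; rfl
  rw [this]
  have hmem : ∀ f : (truncF δ '' BB), ∀ β : (Set.Iio δ),
      truncF ((β : Ordinal.{0}) + 1) (f : Ordinal.{0} → Ordinal.{0}) ∈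
        truncF ((β : Ordinal.{0}) + 1) '' BB := by
    rintro ⟨f, η, hη, rfl⟩ ⟨β, hβ⟩
    exact ⟨η, hη, (truncF_truncF (le_of_lt (hδ β hβ)) η).symm⟩
  refine Cardinal.mk_le_of_injective
    (f := fun f β => (⟨truncF ((β : Ordinal.{0}) + 1) (f : Ordinal.{0} → Ordinal.{0}),
      hmem f β⟩ : (truncF ((β : Ordinal.{0}) + 1) '' BB))) ?_
  intro f g h
  have hval : ∀ β : (Set.Iio δ),
      truncF ((β : Ordinal.{0}) + 1) (f : Ordinal.{0} → Ordinal.{0}) =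
      truncF ((β : Ordinal.{0}) + 1) (g : Ordinal.{0} → Ordinal.{0}) := by
    intro β
    have := congrFun h β
    exact Subtype.ext_iff.1 this
  have hf : (f : Ordinal.{0} → Ordinal.{0}) = truncF δ (f : Ordinal.{0} → Ordinal.{0}) := by
    obtain ⟨η, -, hfe⟩ := f.2
    rw [← hfe, truncF_truncF le_rfl]
  have hg : (g : Ordinal.{0} → Ordinal.{0}) = truncF δ (g : Ordinal.{0} → Ordinal.{0}) := by
    obtain ⟨η, -, hge⟩ := g.2
    rw [← hge, truncF_truncF le_rfl]
  apply Subtype.ext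
  funext ξ
  by_cases hξ : ξ < δ
  · have hlt : ξ < ξ + 1 := by
      rw [Ordinal.add_one_eq_succ]; exact Order.lt_succ ξ
    have := congrFun (hval ⟨ξ, hξ⟩) ξ
    rwa [truncF_eval_lt hlt, truncF_eval_lt hlt] at this
  · rw [hf, hg, truncF_eval_not_lt hξ, truncF_eval_not_lt hξ]

private lemma bounded_of_card_lt {lam : Cardinal.{0}} (hreg : lam.IsRegular)
    {S : Set Ordinal.{0}} (hS : ∀ x ∈ S, x < lam.ord) (hc : #S < Cardinal.lift.{1} lam) :
    ∃ ε < lam.ord, ∀ x ∈ S, x < ε := by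
  obtain ⟨s', hs'lam, hs'⟩ := Cardinal.lt_lift_iff.1 hc
  have hmkeq : Cardinal.lift.{1} #(Quotient.out s') = Cardinal.lift.{0} #(↥S) := by
    rw [Cardinal.mk_out, hs', Cardinal.lift_id']
  obtain ⟨e⟩ := Cardinal.lift_mk_eq'.1 hmkeq
  set f : Quotient.out s' → Ordinal.{0} := fun i => ((e i : ↥S) : Ordinal.{0}) with hfdef
  have hsup : iSup f < lam.ord := by
    refine Ordinal.iSup_lt_ord ?_ fun i => hS _ (e i).2
    rw [Cardinal.mk_out, hreg.cof_eq]
    exact hs'lam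
  refine ⟨iSup f + 1, ?_, ?_⟩
  · rw [Ordinal.add_one_eq_succ]
    exact (Cardinal.isSuccLimit_ord hreg.aleph0_le).succ_lt hsup
  · intro x hx
    have hle : x ≤ iSup f := by
      have : x = f (e.symm ⟨x, hx⟩) := by
        simp [hfdef]
      rw [this]
      exact le_ciSup (Ordinal.bddAbove_range f) _
    have : x < iSup f + 1 := by
      refine lt_of_le_of_lt hle ?_
      rw [Ordinal.add_one_eq_succ]; exact Order.lt_succ _
    exact this

private lemma exists_divergence {lam : Cardinal.{0}} (hreg : lam.IsRegular) (hunc : ℵ₀ < lam)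
    {W : Set (Ordinal.{0} → Ordinal.{0})} (hW : W.Infinite)
    (hfix : ∀ f ∈ W, f = truncF lam.ord f) :
    ∃ γ₀ < lam.ord, ∀ γ, γ₀ ≤ γ → (truncF γ '' W).Infinite := by
  classical
  let g := hW.natEmbedding
  have hdiff : ∀ i j : ℕ, i ≠ j → ∃ ξ, ξ < lam.ord ∧ (g i : Ordinal.{0} → Ordinal.{0}) ξ ≠
      (g j : Ordinal.{0} → Ordinal.{0}) ξ := by
    intro i j hij
    by_contra h
    push_neg at h
    apply g.injective.ne hij
    apply Subtype.ext
    funext ξ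
    by_cases hξ : ξ < lam.ord
    · exact h ξ hξ
    · rw [hfix _ (g i).2, hfix _ (g j).2,
        truncF_eval_not_lt hξ, truncF_eval_not_lt hξ]
  set dd : ℕ × ℕ → Ordinal.{0} := fun q =>
    if h : q.1 ≠ q.2 then (hdiff q.1 q.2 h).choose + 1 else 0 with hdd
  have hddlt : ∀ q, dd q < lam.ord := by
    intro q
    rw [hdd]
    dsimp only
    split
    · next h =>
      rw [Ordinal.add_one_eq_succ]
      exact (Cardinal.isSuccLimit_ord hreg.aleph0_le).succ_lt (hdiff q.1 q.2 h).choose_spec.1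
    · exact hreg.ord_pos
  have hsup : iSup dd < lam.ord := by
    refine Ordinal.iSup_lt_ord ?_ hddlt
    rw [Cardinal.mk_denumerable, hreg.cof_eq]
    exact hunc
  refine ⟨iSup dd, hsup, ?_⟩
  intro γ hγ
  have hinj : ∀ i j : ℕ, truncF γ (g i : Ordinal.{0} → Ordinal.{0}) =
      truncF γ (g j : Ordinal.{0} → Ordinal.{0}) → i = j := by
    intro i j heq
    by_contra hij
    obtain ⟨hξlam, hξne⟩ := (hdiff i j hij).choose_spec
    set ξ := (hdiff i j hij).choose
    have hξγ : ξ < γ := by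
      have h1 : ξ + 1 ≤ dd (i, j) := by
        rw [hdd]
        simp only [ne_eq, hij, not_false_iff, dif_pos]
        exact le_rfl
      have h2 : dd (i, j) ≤ iSup dd := le_ciSup (Ordinal.bddAbove_range dd) (i, j)
      have : ξ < ξ + 1 := by
        rw [Ordinal.add_one_eq_succ]; exact Order.lt_succ ξ
      exact lt_of_lt_of_le this (le_trans (le_trans h1 h2) hγ)
    have := congrFun heq ξ
    rw [truncF_eval_lt hξγ, truncF_eval_lt hξγ] at this
    exact hξne this
  set V : Set (Ordinal.{0} → Ordinal.{0}) :=
    Set.range (fun n : ℕ => (g n : Ordinal.{0} → Ordinal.{0})) with hV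
  have hVsub : V ⊆ W := by
    rintro f ⟨n, rfl⟩
    exact (g n).2
  have hVinf : V.Infinite :=
    Set.infinite_range_of_injective (Subtype.val_injective.comp g.injective)
  have hinjOn : Set.InjOn (truncF γ) V := by
    rintro f ⟨i, rfl⟩ f' ⟨j, rfl⟩ heq
    rw [hinj i j heq]
  exact ((Set.infinite_image_iff hinjOn).2 hVinf).mono (Set.image_mono hVsub)

end Aux

/-- Proposition 3.7. -/
theorem stmt19 (lam : Cardinal.{0}) (hreg : lam.IsRegular) (hunc : ℵ₀ < lam)
    (hKurepa : ∃ T : Set TNode, IsKurepaTree lam T ∧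
      #(branches lam T) = Cardinal.lift.{1} ((2 : Cardinal.{0}) ^ lam))
    (D : Set (Set Ordinal.{0}))
    (hD : IsFilterOn D (Set.Iio lam.ord)) (hDu : IsUniform lam D)
    (p : Set LocalFilter) (hp : p ∈ Qzero lam (Fpr lam)) (hpD : fil lam p ⊆ D)
    (hlim : (∀ μ : Cardinal.{0}, lam ≠ Order.succ μ) →
      lam.IsInaccessible ∧ p ∈ Qzero lam (Fspr lam)) :
    ∀ X ⊆ D, #X < Cardinal.lift.{1} ((2 : Cardinal.{0}) ^ lam) →
      ∃ A ∈ D, ∀ B ∈ X, #(↥(B \ A)) = Cardinal.lift.{1} lam := by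
  classical
  obtain ⟨T, hKT, hKb⟩ := hKurepa
  set BB : Set (Ordinal.{0} → Ordinal.{0}) := branches lam T with hBBdef
  intro X hXD hXcard
  have hfixBB : ∀ η ∈ BB, η = truncF lam.ord η := fun η h => h.1
  -- level cardinality bound
  have hlev : ∀ γ, γ < lam.ord → resCard BB γ < Cardinal.lift.{1} lam := by
    intro γ hγ
    have hmemT : ∀ f : ↥(truncF γ '' BB),
        ((γ, (f : Ordinal.{0} → Ordinal.{0})) : TNode) ∈ treeLevel T γ := by
      rintro ⟨f, η, hη, rfl⟩
      exact ⟨hη.2 γ hγ, rfl⟩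
    have hle : resCard BB γ ≤ #(treeLevel T γ) := by
      refine Cardinal.mk_le_of_injective
        (f := fun f => (⟨(γ, (f : Ordinal.{0} → Ordinal.{0})), hmemT f⟩ : ↥(treeLevel T γ))) ?_
      intro f f' h
      apply Subtype.ext
      exact (Prod.ext_iff.1 (Subtype.ext_iff.1 h)).2
    exact lt_of_le_of_lt hle ((hKT.2 γ hγ).2)
  -- unpack p
  obtain ⟨⟨hpsub, hpcard, hpfib⟩, hpsd⟩ := hp
  have haZ : ∀ t ∈ p, IsLeast t.Z t.a := fun t ht => (hpsub ht).2.2.2.1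
  have hZIio : ∀ t ∈ p, t.Z ⊆ Set.Iio lam.ord := fun t ht => (hpsub ht).2.1
  have hFfil : ∀ t ∈ p, IsFilterOn t.F t.Z := fun t ht => (hpsub ht).2.2.2.2.1
  have halt : ∀ t ∈ p, t.a < lam.ord := fun t ht => hZIio t ht (haZ t ht).1
  have hdisj : ∀ s ∈ p, ∀ t ∈ p, s ≠ t → ∀ x, x ∈ s.Z → x ∈ t.Z → False := by
    intro s hs t ht hne x hxs hxt
    rcases lt_trichotomy s.a t.a with h | h | h
    · exact absurd ((haZ t ht).2 hxt) (not_le.2 (hpsd.2 s hs t ht h hxs))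
    · exact hne (hpsd.1 s hs t ht h)
    · exact absurd ((haZ s hs).2 hxs) (not_le.2 (hpsd.2 t ht s hs h hxt))
  -- cardinal of ω + t.a facts
  have hccinf : ∀ t : LocalFilter, ℵ₀ ≤ (Ordinal.omega0 + t.a).card := by
    intro t
    calc ℵ₀ = Ordinal.omega0.card := Ordinal.card_omega0.symm
      _ ≤ _ := Ordinal.card_le_card le_self_add
  have hccage : ∀ t : LocalFilter, t.a.card ≤ (Ordinal.omega0 + t.a).card :=
    fun t => Ordinal.card_le_card le_add_self
  -- choice of pararegularity data
  have hchoice : ∀ t : LocalFilter, ∃ (κ : Cardinal.{0}) (As : Finset Ordinal.{0} → Set Ordinal.{0}),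
      t ∈ p → ((Ordinal.omega0 + t.a).card ≤ κ ∧ κ < lam ∧
        ((∀ μ : Cardinal.{0}, lam ≠ Order.succ μ) → 2 ^ (Ordinal.omega0 + t.a).card ≤ κ) ∧
        (∀ u : Finset Ordinal.{0}, ↑u ⊆ Set.Iio κ.ord → As u ∈ t.F) ∧
        (∀ U : Set Ordinal.{0}, U ⊆ Set.Iio κ.ord → U.Infinite → (⋂ ξ ∈ U, As {ξ}) = ∅)) := by
    intro t
    by_cases ht : t ∈ p
    · by_cases hsucc : ∀ μ : Cardinal.{0}, lam ≠ Order.succ μ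
      · obtain ⟨-, hQ0⟩ := hlim hsucc
        have htspr : t ∈ Fspr lam := hQ0.1.1 ht
        obtain ⟨κ, hκ1, hκ2, A, hA1, hA2, hA3, hA4⟩ := htspr.2.2.2.2.2
        exact ⟨κ, A, fun _ => ⟨le_trans (Cardinal.cantor _).le hκ1, hκ2,
          fun _ => hκ1, hA1, fun U hU hUinf => hA3 U hU hUinf⟩⟩
      · obtain ⟨κ, hκ1, hκ2, A, hA1, hA2, hA3, hA4⟩ := (hpsub ht).2.2.2.2.2
        exact ⟨κ, A, fun _ => ⟨hκ1, hκ2, fun h => absurd h hsucc, hA1,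
          fun U hU hUinf => hA3 U hU hUinf⟩⟩
    · exact ⟨1, fun _ => ∅, fun h => absurd h ht⟩
  choose κf Asf hKA using hchoice
  -- the level choice
  set It : LocalFilter → Set Ordinal.{0} := fun t =>
    {γ | γ ≤ t.a ∧ resCard BB γ ≤ Cardinal.lift.{1} ((Ordinal.omega0 + t.a).card)} with hItdef
  set lf : LocalFilter → Ordinal.{0} := fun t => sSup (It t) with hlfdef
  have hIt0 : ∀ t, (0 : Ordinal.{0}) ∈ It t := by
    intro t
    simp only [hItdef, Set.mem_setOf_eq]
    refine ⟨zero_le, le_trans (resCard_zero_le BB) ?_⟩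
    calc (1 : Cardinal.{1}) ≤ ℵ₀ := Cardinal.one_lt_aleph0.le
      _ = Cardinal.lift.{1} ℵ₀ := Cardinal.lift_aleph0.symm
      _ ≤ _ := Cardinal.lift_le.2 (hccinf t)
  have hItmem : ∀ t γ, γ ∈ It t ↔ (γ ≤ t.a ∧
      resCard BB γ ≤ Cardinal.lift.{1} ((Ordinal.omega0 + t.a).card)) := by
    intro t γ
    simp only [hItdef, Set.mem_setOf_eq]
  have hItbdd : ∀ t, BddAbove (It t) := by
    intro t
    exact ⟨t.a, fun x hx => ((hItmem t x).1 hx).1⟩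
  have hItne : ∀ t, (It t).Nonempty := fun t => ⟨0, hIt0 t⟩
  have hlle : ∀ t, lf t ≤ t.a := fun t => csSup_le (hItne t) (fun x hx => ((hItmem t x).1 hx).1)
  have hmemle : ∀ t, ∀ γ ∈ It t, γ ≤ lf t := fun t γ hγ => le_csSup (hItbdd t) hγ
  -- key cardinality bound on the chosen level
  have hItml : ∀ t : LocalFilter, lf t ∈ It t ∨
      resCard BB (lf t) ≤ Cardinal.lift.{1} (2 ^ (Ordinal.omega0 + t.a).card) := by
    intro t
    by_cases hin : lf t ∈ It t
    · exact Or.inl hin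
    right
    have hseg : ∀ γ, γ < lf t → γ ∈ It t := by
      intro γ hγ
      have hex : ∃ x ∈ It t, γ < x := by
        by_contra hall
        push_neg at hall
        exact absurd (csSup_le (hItne t) hall) (not_le.2 hγ)
      obtain ⟨x, hx, hγx⟩ := hex
      obtain ⟨hx1, hx2⟩ := (hItmem t x).1 hx
      exact (hItmem t γ).2 ⟨le_trans hγx.le hx1, le_trans (resCard_mono BB hγx.le) hx2⟩
    have hlimlf : ∀ β, β < lf t → β + 1 < lf t := by
      intro β hβ
      have h1 : β + 1 ≤ lf t := by
        rw [Ordinal.add_one_eq_succ]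
        exact Order.succ_le_of_lt hβ
      rcases lt_or_eq_of_le h1 with h | h
      · exact h
      · exfalso
        have hub2 : ∀ x ∈ It t, x ≤ β := by
          intro x hx
          have hxle : x ≤ lf t := hmemle t x hx
          have hxne : x ≠ lf t := fun hxx => hin (hxx ▸ hx)
          have hxlt : x < β + 1 := h ▸ lt_of_le_of_ne hxle hxne
          rw [Ordinal.add_one_eq_succ] at hxlt
          exact Order.lt_succ_iff.1 hxlt
        have hle2 : lf t ≤ β := csSup_le (hItne t) hub2
        rw [← h] at hle2
        have : β < β + 1 := by
          rw [Ordinal.add_one_eq_succ]; exact Order.lt_succ β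
        exact absurd hle2 (not_le.2 this)
    have h1 := resCard_limit_le BB hlimlf
    have h2 : Cardinal.prod (fun β : ↥(Set.Iio (lf t)) => resCard BB ((β : Ordinal.{0}) + 1)) ≤
        Cardinal.prod (fun _ : ↥(Set.Iio (lf t)) =>
          Cardinal.lift.{1} ((Ordinal.omega0 + t.a).card)) := by
      refine Cardinal.prod_le_prod _ _ fun β => ?_
      exact ((hItmem t _).1 (hseg _ (hlimlf β β.2))).2
    calc resCard BB (lf t) ≤ _ := h1
      _ ≤ _ := h2
      _ = Cardinal.lift.{1} ((Ordinal.omega0 + t.a).card) ^ (#(↥(Set.Iio (lf t)))) :=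
          Cardinal.prod_const' _ _
      _ = Cardinal.lift.{1} ((Ordinal.omega0 + t.a).card) ^ Cardinal.lift.{1} ((lf t).card) := by
          rw [Ordinal.mk_Iio_ordinal]
      _ = Cardinal.lift.{1} (((Ordinal.omega0 + t.a).card) ^ ((lf t).card)) :=
          (Cardinal.lift_power _ _).symm
      _ ≤ Cardinal.lift.{1} (((Ordinal.omega0 + t.a).card) ^ ((Ordinal.omega0 + t.a).card)) := by
          refine Cardinal.lift_le.2 (Cardinal.power_le_power_left ?_ ?_)
          · exact (Cardinal.aleph0_pos.trans_le (hccinf t)).ne'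
          · exact le_trans (Ordinal.card_le_card (hlle t)) (hccage t)
      _ = Cardinal.lift.{1} (2 ^ (Ordinal.omega0 + t.a).card) := by
          rw [Cardinal.power_self_eq (hccinf t)]
  -- the main level lemma
  have star : ∀ β, β < lam.ord → ∃ ε, ε < lam.ord ∧ ∀ t ∈ p, ε ≤ t.a →
      (β ≤ lf t ∧ resCard BB (lf t) ≤ Cardinal.lift.{1} (κf t)) := by
    intro β hβ
    by_cases hsucc : ∀ μ : Cardinal.{0}, lam ≠ Order.succ μ
    · -- limit case
      obtain ⟨ρ, hρlam, hρeq⟩ := Cardinal.lt_lift_iff.1 (hlev β hβ)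
      refine ⟨max β ρ.ord, max_lt hβ (Cardinal.ord_lt_ord.2 hρlam), ?_⟩
      intro t ht hta
      have hρcc : ρ ≤ (Ordinal.omega0 + t.a).card := by
        have h0 : ρ.ord ≤ t.a := le_trans (le_max_right _ _) hta
        calc ρ = ρ.ord.card := (Cardinal.card_ord ρ).symm
          _ ≤ t.a.card := Ordinal.card_le_card h0
          _ ≤ _ := hccage t
      have hβIt : β ∈ It t := by
        refine (hItmem t β).2 ⟨le_trans (le_max_left _ _) hta, ?_⟩
        rw [← hρeq]
        exact Cardinal.lift_le.2 hρcc
      refine ⟨hmemle t β hβIt, ?_⟩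
      rcases hItml t with h | h
      · exact le_trans ((hItmem t _).1 h).2
          (Cardinal.lift_le.2 ((hKA t ht).1))
      · exact le_trans h (Cardinal.lift_le.2 ((hKA t ht).2.2.1 hsucc))
    · -- successor case
      push_neg at hsucc
      obtain ⟨μ, hμ⟩ := hsucc
      have hμlam : μ < lam := by rw [hμ]; exact Order.lt_succ μ
      refine ⟨max β μ.ord, max_lt hβ (Cardinal.ord_lt_ord.2 hμlam), ?_⟩
      intro t ht hta
      have hμcc : μ ≤ (Ordinal.omega0 + t.a).card := by
        have h0 : μ.ord ≤ t.a := le_trans (le_max_right _ _) hta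
        calc μ = μ.ord.card := (Cardinal.card_ord μ).symm
          _ ≤ t.a.card := Ordinal.card_le_card h0
          _ ≤ _ := hccage t
      have hmle : ∀ γ, γ ≤ t.a → resCard BB γ ≤ Cardinal.lift.{1} μ := by
        intro γ hγ
        have h1 : resCard BB γ < Cardinal.lift.{1} lam := hlev γ (lt_of_le_of_lt hγ (halt t ht))
        rw [hμ, Cardinal.lift_succ] at h1
        exact Order.lt_succ_iff.1 h1
      have hfull : t.a ∈ It t :=
        (hItmem t t.a).2 ⟨le_rfl, le_trans (hmle t.a le_rfl) (Cardinal.lift_le.2 hμcc)⟩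
      have hlfa : lf t = t.a := le_antisymm (hlle t) (hmemle t _ hfull)
      constructor
      · rw [hlfa]; exact le_trans (le_max_left _ _) hta
      · rw [hlfa]
        exact le_trans (hmle t.a le_rfl)
          (Cardinal.lift_le.2 (le_trans hμcc (hKA t ht).1))
  -- choice of coding functions
  have hctex : ∀ t : LocalFilter, ∃ c : (Ordinal.{0} → Ordinal.{0}) → Ordinal.{0},
      t ∈ p → ((∀ η, c η < (κf t).ord) ∧
        (resCard BB (lf t) ≤ Cardinal.lift.{1} (κf t) →
          ∀ η ∈ BB, ∀ ν ∈ BB, c η = c ν → truncF (lf t) η = truncF (lf t) ν)) := by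
    intro t
    by_cases ht : t ∈ p
    · have hpos : (0 : Ordinal.{0}) < (κf t).ord := by
        rw [← Cardinal.ord_zero]
        exact Cardinal.ord_lt_ord.2
          (lt_of_lt_of_le Cardinal.aleph0_pos (le_trans (hccinf t) ((hKA t ht).1)))
      by_cases hle : resCard BB (lf t) ≤ Cardinal.lift.{1} (κf t)
      · have hcard : #(↥(truncF (lf t) '' BB)) ≤ #(↥(Set.Iio (κf t).ord)) := by
          rw [Ordinal.mk_Iio_ordinal, Cardinal.card_ord]
          exact hle
        obtain ⟨emb⟩ := (Cardinal.le_def _ _).1 hcard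
        refine ⟨fun η => if hη : truncF (lf t) η ∈ truncF (lf t) '' BB then
          ((emb ⟨_, hη⟩ : ↥(Set.Iio (κf t).ord)) : Ordinal.{0}) else 0, fun _ => ⟨?_, ?_⟩⟩
        · intro η
          dsimp only
          split
          · next hη => exact (emb ⟨_, hη⟩).2
          · exact hpos
        · intro _ η hη ν hν heq
          dsimp only at heq
          have h1 : truncF (lf t) η ∈ truncF (lf t) '' BB := Set.mem_image_of_mem _ hη
          have h2 : truncF (lf t) ν ∈ truncF (lf t) '' BB := Set.mem_image_of_mem _ hν
          rw [dif_pos h1, dif_pos h2] at heq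
          have := emb.injective (Subtype.ext heq)
          exact Subtype.ext_iff.1 this
      · exact ⟨fun _ => 0, fun _ => ⟨fun _ => hpos, fun h => absurd h hle⟩⟩
    · exact ⟨fun _ => 0, fun h => absurd h ht⟩
  choose ctf hctf using hctex
  -- the sets A_η
  set Asel : LocalFilter → (Ordinal.{0} → Ordinal.{0}) → Set Ordinal.{0} :=
    fun t η => Asf t {ctf t η} with hAseldef
  have hAselF : ∀ t ∈ p, ∀ η, Asel t η ∈ t.F := by
    intro t ht η
    refine (hKA t ht).2.2.2.1 _ ?_
    intro x hx
    simp only [Finset.coe_singleton, Set.mem_singleton_iff] at hx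
    rw [hx]
    exact (hctf t ht).1 η
  have hAselZ : ∀ t ∈ p, ∀ η, Asel t η ⊆ t.Z := fun t ht η => (hFfil t ht).1 _ (hAselF t ht η)
  set AA : (Ordinal.{0} → Ordinal.{0}) → Set Ordinal.{0} := fun η => ⋃ t ∈ p, Asel t η with hAAdef
  have hAAmem : ∀ η x, x ∈ AA η ↔ ∃ t ∈ p, x ∈ Asel t η := by
    intro η x
    simp only [hAAdef, Set.mem_iUnion, exists_prop]
  have hAAcap : ∀ η, ∀ t ∈ p, AA η ∩ t.Z = Asel t η := by
    intro η t ht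
    apply Set.Subset.antisymm
    · rintro x ⟨hx1, hx2⟩
      obtain ⟨s, hs, hxs⟩ := (hAAmem η x).1 hx1
      by_cases hst : s = t
      · rwa [hst] at hxs
      · exact absurd hx2 (fun hx2 => hdisj s hs t ht hst x (hAselZ s hs η hxs) hx2)
    · intro x hx
      exact ⟨(hAAmem η x).2 ⟨t, ht, hx⟩, hAselZ t ht η hx⟩
  have hAAD : ∀ η, AA η ∈ D := by
    intro η
    apply hpD
    refine ⟨?_, 0, hreg.ord_pos, ?_⟩
    · intro x hx
      obtain ⟨s, hs, hxs⟩ := (hAAmem η x).1 hx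
      exact hZIio s hs (hAselZ s hs η hxs)
    · intro t ht _
      rw [hAAcap η t ht]
      exact hAselF t ht η
  -- the finiteness of the set of branches with bounded difference
  have hWfin : ∀ B ∈ X, ∀ ε, ε < lam.ord →
      {η | η ∈ BB ∧ B \ AA η ⊆ Set.Iio ε}.Finite := by
    intro B hBX ε hε
    by_contra hinf
    replace hinf : Set.Infinite {η | η ∈ BB ∧ B \ AA η ⊆ Set.Iio ε} := hinf
    set W := {η | η ∈ BB ∧ B \ AA η ⊆ Set.Iio ε} with hWdef
    have hWsubBB : ∀ f ∈ W, f ∈ BB := fun f hf => hf.1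
    obtain ⟨γ₀, hγ₀lam, hγ₀⟩ := exists_divergence hreg hunc hinf
      (fun f hf => hfixBB f (hWsubBB f hf))
    obtain ⟨ε₁, hε₁lam, hstar⟩ := star γ₀ hγ₀lam
    set ε' := max ε ε₁ with hε'def
    have hε'lam : ε' < lam.ord := max_lt hε hε₁lam
    set Ubig : Set Ordinal.{0} := {x | ∃ s ∈ p, ε' ≤ s.a ∧ x ∈ s.Z} with hUbigdef
    have hUfil : Ubig ∈ D := by
      apply hpD
      refine ⟨?_, ε', hε'lam, ?_⟩
      · rintro x ⟨s, hs, -, hxs⟩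
        exact hZIio s hs hxs
      · intro t ht hta
        have hZU : t.Z ⊆ Ubig := fun x hx => ⟨t, ht, hta, hx⟩
        rw [Set.inter_eq_self_of_subset_right hZU]
        exact (hFfil t ht).2.1
    have hBU : B ∩ Ubig ∈ D := hD.2.2.2.1 B (hXD hBX) Ubig hUfil
    have hne : (B ∩ Ubig).Nonempty := by
      rcases Set.eq_empty_or_nonempty (B ∩ Ubig) with h | h
      · exact absurd (h ▸ hBU) hD.2.2.2.2
      · exact h
    obtain ⟨x, hxB, s, hs, hsa, hxZ⟩ := hne
    have hxA : ∀ η ∈ W, x ∈ Asel s η := by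
      intro η hη
      have hxε : ¬ x < ε := by
        have h1 : s.a ≤ x := (haZ s hs).2 hxZ
        have h2 : ε ≤ s.a := le_trans (le_max_left _ _) hsa
        exact not_lt.2 (le_trans h2 h1)
      have hxAA : x ∈ AA η := by
        by_contra hxAA
        exact hxε (hη.2 ⟨hxB, hxAA⟩)
      have hmem : x ∈ AA η ∩ s.Z := ⟨hxAA, hxZ⟩
      rwa [hAAcap η s hs] at hmem
    have hsε₁ : ε₁ ≤ s.a := le_trans (le_max_right _ _) hsa
    obtain ⟨hγ₀ls, hresse⟩ := hstar s hs hsε₁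
    have hinjs := (hctf s hs).2 hresse
    set U : Set Ordinal.{0} := (fun η => ctf s η) '' W with hUdef
    have hUsub : U ⊆ Set.Iio (κf s).ord := by
      rintro _ ⟨η, -, rfl⟩
      exact (hctf s hs).1 η
    have hUinf : U.Infinite := by
      by_contra hUfin
      rw [Set.not_infinite] at hUfin
      have himg : (truncF (lf s) '' W) ⊆
          (fun ξ => if h : ∃ η' ∈ W, ctf s η' = ξ then truncF (lf s) h.choose
            else (fun _ => (0 : Ordinal.{0}))) '' U := by
        rintro _ ⟨η, hη, rfl⟩
        refine ⟨ctf s η, ⟨η, hη, rfl⟩, ?_⟩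
        have hex : ∃ η' ∈ W, ctf s η' = ctf s η := ⟨η, hη, rfl⟩
        dsimp only
        rw [dif_pos hex]
        obtain ⟨hη'W, hη'eq⟩ := hex.choose_spec
        exact hinjs _ (hWsubBB _ hη'W) _ (hWsubBB _ hη) hη'eq
      exact (hγ₀ (lf s) hγ₀ls) (Set.Finite.subset (hUfin.image _) himg)
    have hempty := (hKA s hs).2.2.2.2 U hUsub hUinf
    have hxmem : x ∈ ⋂ ξ ∈ U, Asf s {ξ} := by
      refine Set.mem_biInter ?_
      rintro ξ ⟨η, hη, rfl⟩
      exact hxA η hη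
    rw [hempty] at hxmem
    exact hxmem
  -- cardinality of the bad sets
  have hBadcard : ∀ B ∈ X,
      #(↥{η | η ∈ BB ∧ #(↥(B \ AA η)) < Cardinal.lift.{1} lam}) ≤ Cardinal.lift.{1} lam := by
    intro B hBX
    have hsub : {η | η ∈ BB ∧ #(↥(B \ AA η)) < Cardinal.lift.{1} lam} ⊆
        ⋃ ε ∈ Set.Iio lam.ord, {η | η ∈ BB ∧ B \ AA η ⊆ Set.Iio ε} := by
      intro η hη
      obtain ⟨ε, hεlam, hbd⟩ := bounded_of_card_lt hreg (S := B \ AA η)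
        (fun x hx => hD.1 B (hXD hBX) hx.1) hη.2
      exact Set.mem_biUnion hεlam ⟨hη.1, fun x hx => hbd x hx⟩
    refine le_trans (Cardinal.mk_le_mk_of_subset hsub) ?_
    refine le_trans (Cardinal.mk_biUnion_le _ _) ?_
    have hbound : (⨆ ε : ↥(Set.Iio lam.ord),
        #(↥{η | η ∈ BB ∧ B \ AA η ⊆ Set.Iio (ε : Ordinal.{0})})) ≤ ℵ₀ :=
      ciSup_le' fun ε => le_of_lt (Set.Finite.lt_aleph0 (hWfin B hBX ε ε.2))
    calc #(↥(Set.Iio lam.ord)) * _ ≤ Cardinal.lift.{1} lam * ℵ₀ := by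
          refine mul_le_mul' ?_ hbound
          rw [Ordinal.mk_Iio_ordinal, Cardinal.card_ord]
      _ = Cardinal.lift.{1} lam := Cardinal.mul_eq_left
          (Cardinal.aleph0_le_lift.2 hreg.aleph0_le)
          (Cardinal.aleph0_le_lift.2 hreg.aleph0_le) Cardinal.aleph0_ne_zero
  -- assemble
  set Bad : Set Ordinal.{0} → Set (Ordinal.{0} → Ordinal.{0}) :=
    fun B => {η | η ∈ BB ∧ #(↥(B \ AA η)) < Cardinal.lift.{1} lam} with hBaddef
  set Y := ⋃ B ∈ X, Bad B with hYdef
  have hYcard : #(↥Y) < Cardinal.lift.{1} (2 ^ lam) := by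
    refine lt_of_le_of_lt (Cardinal.mk_biUnion_le _ _) ?_
    have h1 : (⨆ B : ↥X, #(↥(Bad B))) ≤ Cardinal.lift.{1} lam :=
      ciSup_le' fun B => hBadcard B B.2
    refine lt_of_le_of_lt (mul_le_mul' le_rfl h1) ?_
    refine lt_of_le_of_lt (Cardinal.mul_le_max _ _) ?_
    have hlamlt : Cardinal.lift.{1} lam < Cardinal.lift.{1} (2 ^ lam) :=
      Cardinal.lift_lt.2 (Cardinal.cantor lam)
    refine max_lt (max_lt hXcard hlamlt) ?_
    exact lt_of_le_of_lt (Cardinal.aleph0_le_lift.2 hreg.aleph0_le) hlamlt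
  have hex : ∃ η, η ∈ BB ∧ η ∉ Y := by
    by_contra h
    push_neg at h
    have hsub : BB ⊆ Y := fun η hη => h η hη
    have hle := Cardinal.mk_le_mk_of_subset hsub
    rw [hKb] at hle
    exact absurd (lt_of_le_of_lt hle hYcard) (lt_irrefl _)
  obtain ⟨η, hηBB, hηY⟩ := hex
  refine ⟨AA η, hAAD η, ?_⟩
  intro B hB
  have h1 : #(↥(B \ AA η)) ≤ Cardinal.lift.{1} lam := by
    have hsub : B \ AA η ⊆ Set.Iio lam.ord := fun x hx => hD.1 B (hXD hB) hx.1
    calc #(↥(B \ AA η)) ≤ #(↥(Set.Iio lam.ord)) := Cardinal.mk_le_mk_of_subset hsub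
      _ = Cardinal.lift.{1} lam := by rw [Ordinal.mk_Iio_ordinal, Cardinal.card_ord]
  have h2 : ¬ #(↥(B \ AA η)) < Cardinal.lift.{1} lam := by
    intro hlt
    exact hηY (Set.mem_biUnion hB ⟨hηBB, hlt⟩)
  exact le_antisymm h1 (not_lt.1 h2)

end

end RS889
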